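/- In the tensor product 𝒲^{κ,j} ⊗ ℱ of the Wakimoto module with the fermionic Fock space, the field ρ(z) = γ(z)²K⁺(z) − 2γ(z)K⁰(z) − K⁻(z) − ∂γ(z) factorizes as ρ(z) = χ(z)·χ̄(z), where χ(z) = ψ¹(z) − γ(z)ψ²(z) and χ̄(z) = ψ̄²(z) + γ(z)ψ̄¹(z); moreover the modes of χ and χ̄ pairwise anticommute: [χ_k, χ_l]₊ = [χ̄_k, χ_l]₊ = [χ̄_k, χ̄_l]₊ = 0 for all k, l ∈ ℤ + 1/2. In particular ρ_n² = 0 need not hold, but χ_k² = χ̄_k² = 0. -/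

import Mathlib

namespace Stmt18
open Function Finset

variable {M : Type*} [AddCommGroup M] [Module ℂ M]

structure Sys (M : Type*) [AddCommGroup M] [Module ℂ M] where
  ψ : Fin 2 → ℤ → Module.End ℂ M
  ψb : Fin 2 → ℤ → Module.End ℂ M
  γ : ℤ → Module.End ℂ M
  hCAR : ∀ (i j : Fin 2) (r s : ℤ),
      ψ i r * ψb j s + ψb j s * ψ i r = if i = j ∧ r + s = 1 then 1 else 0
  hψψ : ∀ (i j : Fin 2) (r s : ℤ), ψ i r * ψ j s + ψ j s * ψ i r = 0
  hψbψb : ∀ (i j : Fin 2) (r s : ℤ), ψb i r * ψb j s + ψb j s * ψb i r = 0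
  hγγ : ∀ m k : ℤ, γ m * γ k = γ k * γ m
  hγψ : ∀ (m : ℤ) (i : Fin 2) (r : ℤ), γ m * ψ i r = ψ i r * γ m
  hγψb : ∀ (m : ℤ) (i : Fin 2) (r : ℤ), γ m * ψb i r = ψb i r * γ m

namespace Sys
variable (S : Sys M)

lemma ψψ_swap (i j : Fin 2) (r s : ℤ) (w : M) :
    S.ψ i r (S.ψ j s w) = - S.ψ j s (S.ψ i r w) := by
  have h := DFunLike.congr_fun (S.hψψ i j r s) w
  simp only [LinearMap.add_apply, Module.End.mul_apply, LinearMap.zero_apply] at h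
  exact eq_neg_of_add_eq_zero_left h

lemma ψbψb_swap (i j : Fin 2) (r s : ℤ) (w : M) :
    S.ψb i r (S.ψb j s w) = - S.ψb j s (S.ψb i r w) := by
  have h := DFunLike.congr_fun (S.hψbψb i j r s) w
  simp only [LinearMap.add_apply, Module.End.mul_apply, LinearMap.zero_apply] at h
  exact eq_neg_of_add_eq_zero_left h

lemma ψψb_swap (i j : Fin 2) (r s : ℤ) (w : M) :
    S.ψ i r (S.ψb j s w) = (if i = j ∧ r + s = 1 then w else 0) - S.ψb j s (S.ψ i r w) := by
  have h := DFunLike.congr_fun (S.hCAR i j r s) w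
  simp only [LinearMap.add_apply, Module.End.mul_apply] at h
  by_cases hc : i = j ∧ r + s = 1
  · rw [if_pos hc] at h ⊢
    simp only [Module.End.one_apply] at h
    exact eq_sub_of_add_eq h
  · rw [if_neg hc] at h ⊢
    simp only [LinearMap.zero_apply] at h
    rw [zero_sub]
    exact eq_neg_of_add_eq_zero_left h

lemma ψbψ_swap (i j : Fin 2) (r s : ℤ) (w : M) :
    S.ψb i r (S.ψ j s w) = (if j = i ∧ s + r = 1 then w else 0) - S.ψ j s (S.ψb i r w) := by
  have h := DFunLike.congr_fun (S.hCAR j i s r) w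
  simp only [LinearMap.add_apply, Module.End.mul_apply] at h
  by_cases hc : j = i ∧ s + r = 1
  · rw [if_pos hc] at h ⊢
    simp only [Module.End.one_apply] at h
    exact eq_sub_of_add_eq' h
  · rw [if_neg hc] at h ⊢
    simp only [LinearMap.zero_apply] at h
    rw [zero_sub]
    exact eq_neg_of_add_eq_zero_right h

lemma γψ_swap (m : ℤ) (i : Fin 2) (r : ℤ) (w : M) :
    S.γ m (S.ψ i r w) = S.ψ i r (S.γ m w) := DFunLike.congr_fun (S.hγψ m i r) w

lemma γψb_swap (m : ℤ) (i : Fin 2) (r : ℤ) (w : M) :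
    S.γ m (S.ψb i r w) = S.ψb i r (S.γ m w) := DFunLike.congr_fun (S.hγψb m i r) w

lemma γγ_swap (m k : ℤ) (w : M) :
    S.γ m (S.γ k w) = S.γ k (S.γ m w) := DFunLike.congr_fun (S.hγγ m k) w

/-- the vector `v` is annihilated by all modes of index `≥ N`. -/
def Killed (N : ℤ) (v : M) : Prop :=
  ∀ r : ℤ, N ≤ r → S.γ r v = 0 ∧ ∀ i : Fin 2, S.ψ i r v = 0 ∧ S.ψb i r v = 0

variable {S}

lemma Killed.γ_eq {N : ℤ} {v : M} (h : S.Killed N v) {r : ℤ} (hr : N ≤ r) : S.γ r v = 0 :=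
  (h r hr).1

lemma Killed.ψ_eq {N : ℤ} {v : M} (h : S.Killed N v) (i : Fin 2) {r : ℤ} (hr : N ≤ r) :
    S.ψ i r v = 0 := ((h r hr).2 i).1

lemma Killed.ψb_eq {N : ℤ} {v : M} (h : S.Killed N v) (i : Fin 2) {r : ℤ} (hr : N ≤ r) :
    S.ψb i r v = 0 := ((h r hr).2 i).2

lemma Killed.mono {N N' : ℤ} {v : M} (h : S.Killed N v) (hNN : N ≤ N') : S.Killed N' v :=
  fun r hr => h r (hNN.trans hr)

lemma killed_zero (S : Sys M) (N : ℤ) : S.Killed N (0 : M) := by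
  intro r _; simp

lemma Killed.add {N : ℤ} {v w : M} (hv : S.Killed N v) (hw : S.Killed N w) :
    S.Killed N (v + w) := by
  intro r hr
  refine ⟨?_, fun i => ⟨?_, ?_⟩⟩ <;> rw [map_add]
  · rw [hv.γ_eq hr, hw.γ_eq hr, add_zero]
  · rw [hv.ψ_eq i hr, hw.ψ_eq i hr, add_zero]
  · rw [hv.ψb_eq i hr, hw.ψb_eq i hr, add_zero]

lemma killed_sum {ι : Type*} {N : ℤ} (t : Finset ι) (f : ι → M)
    (h : ∀ i ∈ t, S.Killed N (f i)) : S.Killed N (∑ i ∈ t, f i) := by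
  classical
  induction t using Finset.induction_on with
  | empty => simpa using killed_zero S N
  | insert _ _ hx ih =>
    rw [Finset.sum_insert hx]
    exact (h _ (Finset.mem_insert_self _ _)).add
      (ih fun i hi => h i (Finset.mem_insert_of_mem hi))

lemma Killed.γA {N : ℤ} {v : M} (h : S.Killed N v) (m : ℤ) : S.Killed N (S.γ m v) := by
  intro r hr
  refine ⟨?_, fun i => ⟨?_, ?_⟩⟩
  · rw [S.γγ_swap, h.γ_eq hr, map_zero]
  · rw [← S.γψ_swap, h.ψ_eq i hr, map_zero]
  · rw [← S.γψb_swap, h.ψb_eq i hr, map_zero]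

lemma Killed.ψA {N : ℤ} {v : M} (h : S.Killed N v) (i : Fin 2) (s : ℤ) :
    S.Killed (max N (2 - s)) (S.ψ i s v) := by
  intro r hr
  have hrN : N ≤ r := le_trans (le_max_left _ _) hr
  have hrs : ¬(s + r = 1) := by have := le_trans (le_max_right _ _) hr; omega
  refine ⟨?_, fun j => ⟨?_, ?_⟩⟩
  · rw [S.γψ_swap, h.γ_eq hrN, map_zero]
  · rw [S.ψψ_swap, h.ψ_eq j hrN, map_zero, neg_zero]
  · rw [S.ψbψ_swap, h.ψb_eq j hrN, map_zero, if_neg (by tauto), sub_zero]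

lemma Killed.ψbA {N : ℤ} {v : M} (h : S.Killed N v) (i : Fin 2) (s : ℤ) :
    S.Killed (max N (2 - s)) (S.ψb i s v) := by
  intro r hr
  have hrN : N ≤ r := le_trans (le_max_left _ _) hr
  have hrs : ¬(r + s = 1) := by have := le_trans (le_max_right _ _) hr; omega
  refine ⟨?_, fun j => ⟨?_, ?_⟩⟩
  · rw [S.γψb_swap, h.γ_eq hrN, map_zero]
  · rw [S.ψψb_swap, h.ψ_eq j hrN, map_zero, if_neg (by tauto), sub_zero]
  · rw [S.ψbψb_swap, h.ψb_eq j hrN, map_zero, neg_zero]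

variable (S)

/-- support bound for `m ↦ γ m (ψ i (r-m) v)` -/
lemma suppγψ {N : ℤ} {v : M} (h : S.Killed N v) (i : Fin 2) (r : ℤ) :
    (Function.support fun m => S.γ m (S.ψ i (r - m) v)) ⊆ ↑(Finset.Ioo (r - N) N) := by
  rw [Function.support_subset_iff']
  intro m hm
  simp only [Finset.coe_Ioo, Set.mem_Ioo, not_and_or, not_lt] at hm
  rcases hm with hm | hm
  · rw [h.ψ_eq i (by omega), map_zero]
  · rw [S.γψ_swap, h.γ_eq hm, map_zero]

lemma suppγψb {N : ℤ} {v : M} (h : S.Killed N v) (i : Fin 2) (r : ℤ) :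
    (Function.support fun m => S.γ m (S.ψb i (r - m) v)) ⊆ ↑(Finset.Ioo (r - N) N) := by
  rw [Function.support_subset_iff']
  intro m hm
  simp only [Finset.coe_Ioo, Set.mem_Ioo, not_and_or, not_lt] at hm
  rcases hm with hm | hm
  · rw [h.ψb_eq i (by omega), map_zero]
  · rw [S.γψb_swap, h.γ_eq hm, map_zero]

lemma Xsum {N : ℤ} {v : M} (h : S.Killed N v) (i : Fin 2) (r : ℤ) {T : Finset ℤ}
    (hT : Finset.Ioo (r - N) N ⊆ T) :
    ∑ᶠ m, S.γ m (S.ψ i (r - m) v) = ∑ m ∈ T, S.γ m (S.ψ i (r - m) v) :=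
  finsum_eq_sum_of_support_subset _ ((S.suppγψ h i r).trans (Finset.coe_subset.mpr hT))

lemma Xbsum {N : ℤ} {v : M} (h : S.Killed N v) (i : Fin 2) (r : ℤ) {T : Finset ℤ}
    (hT : Finset.Ioo (r - N) N ⊆ T) :
    ∑ᶠ m, S.γ m (S.ψb i (r - m) v) = ∑ m ∈ T, S.γ m (S.ψb i (r - m) v) :=
  finsum_eq_sum_of_support_subset _ ((S.suppγψb h i r).trans (Finset.coe_subset.mpr hT))

lemma suppγψ_fin {N : ℤ} {v : M} (h : S.Killed N v) (i : Fin 2) (r : ℤ) :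
    (Function.support fun m => S.γ m (S.ψ i (r - m) v)).Finite :=
  Set.Finite.subset (Finset.finite_toSet _) (S.suppγψ h i r)

lemma suppγψb_fin {N : ℤ} {v : M} (h : S.Killed N v) (i : Fin 2) (r : ℤ) :
    (Function.support fun m => S.γ m (S.ψb i (r - m) v)).Finite :=
  Set.Finite.subset (Finset.finite_toSet _) (S.suppγψb h i r)

/-- killed bound for `X i s v = ∑ᶠ m, γ m (ψ i (s-m) v)` -/
lemma killed_X {N : ℤ} {v : M} (h : S.Killed N v) (i : Fin 2) (s : ℤ) :
    S.Killed (max N (N + 2 - s)) (∑ᶠ m, S.γ m (S.ψ i (s - m) v)) := by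
  rw [S.Xsum h i s (Finset.Subset.refl _)]
  refine killed_sum _ _ fun m hm => ?_
  simp only [Finset.mem_Ioo] at hm
  exact ((h.ψA i (s - m)).γA m).mono (by simp only [max_le_iff, le_max_iff]; omega)

lemma killed_Xb {N : ℤ} {v : M} (h : S.Killed N v) (i : Fin 2) (s : ℤ) :
    S.Killed (max N (N + 2 - s)) (∑ᶠ m, S.γ m (S.ψb i (s - m) v)) := by
  rw [S.Xbsum h i s (Finset.Subset.refl _)]
  refine killed_sum _ _ fun m hm => ?_
  simp only [Finset.mem_Ioo] at hm
  exact ((h.ψbA i (s - m)).γA m).mono (by simp only [max_le_iff, le_max_iff]; omega)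

variable (S : Sys M)

lemma map_ite_zero (f : Module.End ℂ M) (c : Prop) [Decidable c] (x : M) :
    f (if c then x else 0) = if c then f x else 0 := by
  split_ifs <;> simp

/-- `{ψ i r, X j s} = 0` where `X j s = ∑ᶠ m, γ m ψ j (s-m)` -/
lemma ψX_anti {N : ℤ} {v : M} (h : S.Killed N v) (i j : Fin 2) (r s : ℤ) :
    S.ψ i r (∑ᶠ m, S.γ m (S.ψ j (s - m) v))
      + ∑ᶠ m, S.γ m (S.ψ j (s - m) (S.ψ i r v)) = 0 := by
  set N1 := max N (2 - r) with hN1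
  have h1 : S.Killed N1 v := h.mono (le_max_left _ _)
  have h2 : S.Killed N1 (S.ψ i r v) := h.ψA i r
  rw [S.Xsum h1 j s (Finset.Subset.refl _), S.Xsum h2 j s (Finset.Subset.refl _), map_sum,
    ← Finset.sum_add_distrib]
  refine Finset.sum_eq_zero fun m _ => ?_
  rw [← S.γψ_swap, S.ψψ_swap, map_neg, neg_add_cancel]

lemma ψbXb_anti {N : ℤ} {v : M} (h : S.Killed N v) (i j : Fin 2) (r s : ℤ) :
    S.ψb i r (∑ᶠ m, S.γ m (S.ψb j (s - m) v))
      + ∑ᶠ m, S.γ m (S.ψb j (s - m) (S.ψb i r v)) = 0 := by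
  set N1 := max N (2 - r) with hN1
  have h1 : S.Killed N1 v := h.mono (le_max_left _ _)
  have h2 : S.Killed N1 (S.ψb i r v) := h.ψbA i r
  rw [S.Xbsum h1 j s (Finset.Subset.refl _), S.Xbsum h2 j s (Finset.Subset.refl _), map_sum,
    ← Finset.sum_add_distrib]
  refine Finset.sum_eq_zero fun m _ => ?_
  rw [← S.γψb_swap, S.ψbψb_swap, map_neg, neg_add_cancel]

/-- `{ψb i r, X j s} = δ_{ij} γ (r+s-1)` -/
lemma ψbX_anti {N : ℤ} {v : M} (h : S.Killed N v) (i j : Fin 2) (r s : ℤ) :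
    S.ψb i r (∑ᶠ m, S.γ m (S.ψ j (s - m) v))
      + ∑ᶠ m, S.γ m (S.ψ j (s - m) (S.ψb i r v))
      = if j = i then S.γ (r + s - 1) v else 0 := by
  classical
  set N1 := max N (2 - r) with hN1
  have h1 : S.Killed N1 v := h.mono (le_max_left _ _)
  have h2 : S.Killed N1 (S.ψb i r v) := h.ψbA i r
  set T : Finset ℤ := insert (r + s - 1) (Finset.Ioo (s - N1) N1) with hT
  have hsub : Finset.Ioo (s - N1) N1 ⊆ T := Finset.subset_insert _ _
  rw [S.Xsum h1 j s hsub, S.Xsum h2 j s hsub, map_sum, ← Finset.sum_add_distrib]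
  have hterm : ∀ m ∈ T,
      S.ψb i r (S.γ m (S.ψ j (s - m) v)) + S.γ m (S.ψ j (s - m) (S.ψb i r v))
        = if j = i ∧ m = r + s - 1 then S.γ m v else 0 := by
    intro m _
    rw [← S.γψb_swap, S.ψbψ_swap, map_sub, map_ite_zero, sub_add_cancel]
    exact if_congr (and_congr_right' (by omega)) rfl rfl
  rw [Finset.sum_congr rfl hterm]
  by_cases hij : j = i
  · simp only [hij, true_and, if_pos]
    rw [Finset.sum_ite_eq' T (r + s - 1) (fun m => S.γ m v),
      if_pos (Finset.mem_insert_self _ _)]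
  · simp only [hij, false_and, if_false, Finset.sum_const_zero]

/-- `{ψ i r, Xb j s} = δ_{ij} γ (r+s-1)` -/
lemma ψXb_anti {N : ℤ} {v : M} (h : S.Killed N v) (i j : Fin 2) (r s : ℤ) :
    S.ψ i r (∑ᶠ m, S.γ m (S.ψb j (s - m) v))
      + ∑ᶠ m, S.γ m (S.ψb j (s - m) (S.ψ i r v))
      = if i = j then S.γ (r + s - 1) v else 0 := by
  classical
  set N1 := max N (2 - r) with hN1
  have h1 : S.Killed N1 v := h.mono (le_max_left _ _)
  have h2 : S.Killed N1 (S.ψ i r v) := h.ψA i r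
  set T : Finset ℤ := insert (r + s - 1) (Finset.Ioo (s - N1) N1) with hT
  have hsub : Finset.Ioo (s - N1) N1 ⊆ T := Finset.subset_insert _ _
  rw [S.Xbsum h1 j s hsub, S.Xbsum h2 j s hsub, map_sum, ← Finset.sum_add_distrib]
  have hterm : ∀ m ∈ T,
      S.ψ i r (S.γ m (S.ψb j (s - m) v)) + S.γ m (S.ψb j (s - m) (S.ψ i r v))
        = if i = j ∧ m = r + s - 1 then S.γ m v else 0 := by
    intro m _
    rw [← S.γψ_swap, S.ψψb_swap, map_sub, map_ite_zero, sub_add_cancel]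
    exact if_congr (and_congr_right' (by omega)) rfl rfl
  rw [Finset.sum_congr rfl hterm]
  by_cases hij : i = j
  · simp only [hij, true_and, if_pos]
    rw [Finset.sum_ite_eq' T (r + s - 1) (fun m => S.γ m v),
      if_pos (Finset.mem_insert_self _ _)]
  · simp only [hij, false_and, if_false, Finset.sum_const_zero]

lemma XX_anti {N : ℤ} {v : M} (h : S.Killed N v) (i j : Fin 2) (r s : ℤ) :
    (∑ᶠ m', S.γ m' (S.ψ i (r - m') (∑ᶠ m, S.γ m (S.ψ j (s - m) v))))
      + (∑ᶠ m, S.γ m (S.ψ j (s - m) (∑ᶠ m', S.γ m' (S.ψ i (r - m') v)))) = 0 := by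
  set B := max (max N (N + 2 - s)) (max N (N + 2 - r)) with hB
  have hNB : N ≤ B := le_trans (le_max_left _ _) (le_max_left _ _)
  have hXs : S.Killed B (∑ᶠ m, S.γ m (S.ψ j (s - m) v)) :=
    (S.killed_X h j s).mono (le_max_left _ _)
  have hXr : S.Killed B (∑ᶠ m', S.γ m' (S.ψ i (r - m') v)) :=
    (S.killed_X h i r).mono (le_max_right _ _)
  have hzs : ∀ m ∉ Finset.Ioo (s - N) N, S.γ m (S.ψ j (s - m) v) = 0 := fun m hm =>
    Function.support_subset_iff'.mp (S.suppγψ h j s) m (by simpa using hm)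
  have hzr : ∀ m' ∉ Finset.Ioo (r - N) N, S.γ m' (S.ψ i (r - m') v) = 0 := fun m hm =>
    Function.support_subset_iff'.mp (S.suppγψ h i r) m (by simpa using hm)
  rw [S.Xsum hXs i r (Finset.Subset.refl _), S.Xsum hXr j s (Finset.Subset.refl _),
    S.Xsum h j s (T := Finset.Ioo (s - B) B) (Finset.Ioo_subset_Ioo (by omega) hNB),
    S.Xsum h i r (T := Finset.Ioo (r - B) B) (Finset.Ioo_subset_Ioo (by omega) hNB)]
  simp only [map_sum]
  rw [Finset.sum_comm, ← Finset.sum_add_distrib]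
  refine Finset.sum_eq_zero fun m _ => ?_
  rw [← Finset.sum_add_distrib]
  refine Finset.sum_eq_zero fun m' _ => ?_
  rw [← S.γψ_swap, S.γγ_swap, ← S.γψ_swap, S.ψψ_swap j i, map_neg, map_neg, S.γγ_swap]
  exact add_neg_cancel _

lemma XbXb_anti {N : ℤ} {v : M} (h : S.Killed N v) (i j : Fin 2) (r s : ℤ) :
    (∑ᶠ m', S.γ m' (S.ψb i (r - m') (∑ᶠ m, S.γ m (S.ψb j (s - m) v))))
      + (∑ᶠ m, S.γ m (S.ψb j (s - m) (∑ᶠ m', S.γ m' (S.ψb i (r - m') v)))) = 0 := by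
  set B := max (max N (N + 2 - s)) (max N (N + 2 - r)) with hB
  have hNB : N ≤ B := le_trans (le_max_left _ _) (le_max_left _ _)
  have hXs : S.Killed B (∑ᶠ m, S.γ m (S.ψb j (s - m) v)) :=
    (S.killed_Xb h j s).mono (le_max_left _ _)
  have hXr : S.Killed B (∑ᶠ m', S.γ m' (S.ψb i (r - m') v)) :=
    (S.killed_Xb h i r).mono (le_max_right _ _)
  rw [S.Xbsum hXs i r (Finset.Subset.refl _), S.Xbsum hXr j s (Finset.Subset.refl _),
    S.Xbsum h j s (T := Finset.Ioo (s - B) B) (Finset.Ioo_subset_Ioo (by omega) hNB),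
    S.Xbsum h i r (T := Finset.Ioo (r - B) B) (Finset.Ioo_subset_Ioo (by omega) hNB)]
  simp only [map_sum]
  rw [Finset.sum_comm, ← Finset.sum_add_distrib]
  refine Finset.sum_eq_zero fun m _ => ?_
  rw [← Finset.sum_add_distrib]
  refine Finset.sum_eq_zero fun m' _ => ?_
  rw [← S.γψb_swap, S.γγ_swap, ← S.γψb_swap, S.ψbψb_swap j i, map_neg, map_neg, S.γγ_swap]
  exact add_neg_cancel _

lemma XXb_anti {N : ℤ} {v : M} (h : S.Killed N v) {i j : Fin 2} (hij : ¬ i = j) (r s : ℤ) :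
    (∑ᶠ m', S.γ m' (S.ψ i (r - m') (∑ᶠ m, S.γ m (S.ψb j (s - m) v))))
      + (∑ᶠ m, S.γ m (S.ψb j (s - m) (∑ᶠ m', S.γ m' (S.ψ i (r - m') v)))) = 0 := by
  set B := max (max N (N + 2 - s)) (max N (N + 2 - r)) with hB
  have hNB : N ≤ B := le_trans (le_max_left _ _) (le_max_left _ _)
  have hXs : S.Killed B (∑ᶠ m, S.γ m (S.ψb j (s - m) v)) :=
    (S.killed_Xb h j s).mono (le_max_left _ _)
  have hXr : S.Killed B (∑ᶠ m', S.γ m' (S.ψ i (r - m') v)) :=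
    (S.killed_X h i r).mono (le_max_right _ _)
  rw [S.Xsum hXs i r (Finset.Subset.refl _), S.Xbsum hXr j s (Finset.Subset.refl _),
    S.Xbsum h j s (T := Finset.Ioo (s - B) B) (Finset.Ioo_subset_Ioo (by omega) hNB),
    S.Xsum h i r (T := Finset.Ioo (r - B) B) (Finset.Ioo_subset_Ioo (by omega) hNB)]
  simp only [map_sum]
  rw [Finset.sum_comm, ← Finset.sum_add_distrib]
  refine Finset.sum_eq_zero fun m _ => ?_
  rw [← Finset.sum_add_distrib]
  refine Finset.sum_eq_zero fun m' _ => ?_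
  rw [← S.γψ_swap, S.γγ_swap, ← S.γψb_swap, S.ψbψ_swap j _ _ (r - m'), if_neg (by tauto),
    zero_sub, map_neg, map_neg, S.γγ_swap]
  exact add_neg_cancel _
variable {S}

lemma X_vanish {N : ℤ} {v : M} (hk : S.Killed N v) (i : Fin 2) {r : ℤ} (hr : 2 * N - 1 ≤ r) :
    ∑ᶠ m, S.γ m (S.ψ i (r - m) v) = 0 := by
  rw [S.Xsum hk i r (Finset.Subset.refl _)]
  refine Finset.sum_eq_zero fun m hm => ?_
  rw [Finset.mem_Ioo] at hm
  rw [hk.ψ_eq i (show N ≤ r - m by omega), map_zero]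

lemma Xb_vanish {N : ℤ} {v : M} (hk : S.Killed N v) (i : Fin 2) {r : ℤ} (hr : 2 * N - 1 ≤ r) :
    ∑ᶠ m, S.γ m (S.ψb i (r - m) v) = 0 := by
  rw [S.Xbsum hk i r (Finset.Subset.refl _)]
  refine Finset.sum_eq_zero fun m hm => ?_
  rw [Finset.mem_Ioo] at hm
  rw [hk.ψb_eq i (show N ≤ r - m by omega), map_zero]

section Chi

variable (χ χb : ℤ → Module.End ℂ M)
variable (hχ : ∀ (u : ℤ) (w : M), χ u w = S.ψ 0 u w - ∑ᶠ m : ℤ, S.γ m (S.ψ 1 (u - m) w))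
variable (hχb : ∀ (u : ℤ) (w : M), χb u w = S.ψb 1 u w + ∑ᶠ m : ℤ, S.γ m (S.ψb 0 (u - m) w))

include hχ in
lemma chi_vanish {N : ℤ} {v : M} (hk : S.Killed N v) (hN : 1 ≤ N) {r : ℤ} (hr : 2 * N - 1 ≤ r) :
    χ r v = 0 := by
  rw [hχ, X_vanish hk 1 hr, hk.ψ_eq 0 (by omega), sub_zero]

include hχb in
lemma chib_vanish {N : ℤ} {v : M} (hk : S.Killed N v) (hN : 1 ≤ N) {r : ℤ} (hr : 2 * N - 1 ≤ r) :
    χb r v = 0 := by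
  rw [hχb, Xb_vanish hk 0 hr, hk.ψb_eq 1 (by omega), add_zero]

include hχ in
lemma chi_expand {N : ℤ} {v : M} (hk : S.Killed N v) (r s : ℤ) :
    χ r (χ s v) = S.ψ 0 r (S.ψ 0 s v) - S.ψ 0 r (∑ᶠ m, S.γ m (S.ψ 1 (s - m) v))
      - (∑ᶠ m, S.γ m (S.ψ 1 (r - m) (S.ψ 0 s v)))
      + (∑ᶠ m, S.γ m (S.ψ 1 (r - m) (∑ᶠ m', S.γ m' (S.ψ 1 (s - m') v)))) := by
  have h1 : S.Killed (max N (2 - s)) (S.ψ 0 s v) := hk.ψA 0 s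
  have h2 := S.killed_X hk 1 s
  rw [hχ s v, hχ r]
  rw [map_sub]
  have e : (fun m => S.γ m (S.ψ 1 (r - m)
        (S.ψ 0 s v - ∑ᶠ m', S.γ m' (S.ψ 1 (s - m') v))))
      = fun m => S.γ m (S.ψ 1 (r - m) (S.ψ 0 s v))
          - S.γ m (S.ψ 1 (r - m) (∑ᶠ m', S.γ m' (S.ψ 1 (s - m') v))) := by
    funext m; rw [map_sub, map_sub]
  rw [e, finsum_sub_distrib (S.suppγψ_fin h1 1 r) (S.suppγψ_fin h2 1 r)]
  abel

include hχb in
lemma chib_expand {N : ℤ} {v : M} (hk : S.Killed N v) (r s : ℤ) :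
    χb r (χb s v) = S.ψb 1 r (S.ψb 1 s v) + S.ψb 1 r (∑ᶠ m, S.γ m (S.ψb 0 (s - m) v))
      + (∑ᶠ m, S.γ m (S.ψb 0 (r - m) (S.ψb 1 s v)))
      + (∑ᶠ m, S.γ m (S.ψb 0 (r - m) (∑ᶠ m', S.γ m' (S.ψb 0 (s - m') v)))) := by
  have h1 : S.Killed (max N (2 - s)) (S.ψb 1 s v) := hk.ψbA 1 s
  have h2 := S.killed_Xb hk 0 s
  rw [hχb s v, hχb r]
  rw [map_add]
  have e : (fun m => S.γ m (S.ψb 0 (r - m)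
        (S.ψb 1 s v + ∑ᶠ m', S.γ m' (S.ψb 0 (s - m') v))))
      = fun m => S.γ m (S.ψb 0 (r - m) (S.ψb 1 s v))
          + S.γ m (S.ψb 0 (r - m) (∑ᶠ m', S.γ m' (S.ψb 0 (s - m') v))) := by
    funext m; rw [map_add, map_add]
  rw [e, finsum_add_distrib (S.suppγψb_fin h1 0 r) (S.suppγψb_fin h2 0 r)]
  abel

include hχ hχb in
lemma chi_chib_expand {N : ℤ} {v : M} (hk : S.Killed N v) (r s : ℤ) :
    χ s (χb r v) = S.ψ 0 s (S.ψb 1 r v) + S.ψ 0 s (∑ᶠ m, S.γ m (S.ψb 0 (r - m) v))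
      - (∑ᶠ m, S.γ m (S.ψ 1 (s - m) (S.ψb 1 r v)))
      - (∑ᶠ m, S.γ m (S.ψ 1 (s - m) (∑ᶠ m', S.γ m' (S.ψb 0 (r - m') v)))) := by
  have h1 : S.Killed (max N (2 - r)) (S.ψb 1 r v) := hk.ψbA 1 r
  have h2 := S.killed_Xb hk 0 r
  rw [hχb r v, hχ s]
  rw [map_add]
  have e : (fun m => S.γ m (S.ψ 1 (s - m)
        (S.ψb 1 r v + ∑ᶠ m', S.γ m' (S.ψb 0 (r - m') v))))
      = fun m => S.γ m (S.ψ 1 (s - m) (S.ψb 1 r v))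
          + S.γ m (S.ψ 1 (s - m) (∑ᶠ m', S.γ m' (S.ψb 0 (r - m') v))) := by
    funext m; rw [map_add, map_add]
  rw [e, finsum_add_distrib (S.suppγψ_fin h1 1 s) (S.suppγψ_fin h2 1 s)]
  abel

include hχ hχb in
lemma chib_chi_expand {N : ℤ} {v : M} (hk : S.Killed N v) (r s : ℤ) :
    χb r (χ s v) = S.ψb 1 r (S.ψ 0 s v) - S.ψb 1 r (∑ᶠ m, S.γ m (S.ψ 1 (s - m) v))
      + (∑ᶠ m, S.γ m (S.ψb 0 (r - m) (S.ψ 0 s v)))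
      - (∑ᶠ m, S.γ m (S.ψb 0 (r - m) (∑ᶠ m', S.γ m' (S.ψ 1 (s - m') v)))) := by
  have h1 : S.Killed (max N (2 - s)) (S.ψ 0 s v) := hk.ψA 0 s
  have h2 := S.killed_X hk 1 s
  rw [hχ s v, hχb r]
  rw [map_sub]
  have e : (fun m => S.γ m (S.ψb 0 (r - m)
        (S.ψ 0 s v - ∑ᶠ m', S.γ m' (S.ψ 1 (s - m') v))))
      = fun m => S.γ m (S.ψb 0 (r - m) (S.ψ 0 s v))
          - S.γ m (S.ψb 0 (r - m) (∑ᶠ m', S.γ m' (S.ψ 1 (s - m') v))) := by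
    funext m; rw [map_sub, map_sub]
  rw [e, finsum_sub_distrib (S.suppγψb_fin h1 0 r) (S.suppγψb_fin h2 0 r)]
  abel

include hχ in
lemma chi_chi_mul (hloc : ∀ w : M, ∃ N : ℤ, S.Killed N w) (r s : ℤ) :
    χ r * χ s + χ s * χ r = 0 := by
  apply LinearMap.ext; intro v
  obtain ⟨N, hk⟩ := hloc v
  simp only [LinearMap.add_apply, Module.End.mul_apply, LinearMap.zero_apply]
  rw [chi_expand χ hχ hk r s, chi_expand χ hχ hk s r]
  rw [S.ψψ_swap 0 0 r s v,
    eq_neg_of_add_eq_zero_left (S.ψX_anti hk 0 1 r s),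
    eq_neg_of_add_eq_zero_left (S.ψX_anti hk 0 1 s r),
    eq_neg_of_add_eq_zero_left (S.XX_anti hk 1 1 r s)]
  abel

include hχb in
lemma chib_chib_mul (hloc : ∀ w : M, ∃ N : ℤ, S.Killed N w) (r s : ℤ) :
    χb r * χb s + χb s * χb r = 0 := by
  apply LinearMap.ext; intro v
  obtain ⟨N, hk⟩ := hloc v
  simp only [LinearMap.add_apply, Module.End.mul_apply, LinearMap.zero_apply]
  rw [chib_expand χb hχb hk r s, chib_expand χb hχb hk s r]
  rw [S.ψbψb_swap 1 1 r s v,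
    eq_neg_of_add_eq_zero_left (S.ψbXb_anti hk 1 0 r s),
    eq_neg_of_add_eq_zero_left (S.ψbXb_anti hk 1 0 s r),
    eq_neg_of_add_eq_zero_left (S.XbXb_anti hk 0 0 r s)]
  abel

include hχ hχb in
lemma chib_chi_mul (hloc : ∀ w : M, ∃ N : ℤ, S.Killed N w) (r s : ℤ) :
    χb r * χ s + χ s * χb r = 0 := by
  apply LinearMap.ext; intro v
  obtain ⟨N, hk⟩ := hloc v
  simp only [LinearMap.add_apply, Module.End.mul_apply, LinearMap.zero_apply]
  rw [chib_chi_expand χ χb hχ hχb hk r s, chi_chib_expand χ χb hχ hχb hk r s]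
  -- groups
  have g1 : S.ψ 0 s (S.ψb 1 r v) = (0 : M) - S.ψb 1 r (S.ψ 0 s v) := by
    rw [S.ψψb_swap 0 1 s r v, if_neg (fun hc => absurd hc.1 (by decide))]
  have g2 : S.ψ 0 s (∑ᶠ m, S.γ m (S.ψb 0 (r - m) v))
      = S.γ (s + r - 1) v - ∑ᶠ m, S.γ m (S.ψb 0 (r - m) (S.ψ 0 s v)) := by
    have := S.ψXb_anti hk 0 0 s r
    rw [if_pos rfl] at this
    exact eq_sub_of_add_eq this
  have g3 : S.ψb 1 r (∑ᶠ m, S.γ m (S.ψ 1 (s - m) v))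
      = S.γ (r + s - 1) v - ∑ᶠ m, S.γ m (S.ψ 1 (s - m) (S.ψb 1 r v)) := by
    have := S.ψbX_anti hk 1 1 r s
    rw [if_pos rfl] at this
    exact eq_sub_of_add_eq this
  have g4 : (∑ᶠ m', S.γ m' (S.ψ 1 (s - m') (∑ᶠ m, S.γ m (S.ψb 0 (r - m) v))))
      = - ∑ᶠ m, S.γ m (S.ψb 0 (r - m) (∑ᶠ m', S.γ m' (S.ψ 1 (s - m') v))) :=
    eq_neg_of_add_eq_zero_left (S.XXb_anti hk (by decide : ¬ (1:Fin 2) = 0) s r)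
  rw [g1, g2, g3, g4]
  have : s + r - 1 = r + s - 1 := by ring
  rw [this]
  abel

end Chi
lemma ite_zero_smul' (P : Prop) [Decidable P] (x : M) :
    (if P then x else 0) = (if P then (1:ℤ) else 0) • x := by split_ifs <;> simp

section Main1

variable {n : ℤ} {v : M} {N : ℤ}
variable (χ χb : ℤ → Module.End ℂ M)

/-- per-mode expansion of `χ r (χb (n+1-r) v)` -/
lemma hexp_aux
    (hχ : ∀ (u : ℤ) (w : M), χ u w = S.ψ 0 u w - ∑ᶠ m : ℤ, S.γ m (S.ψ 1 (u - m) w))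
    (hχb : ∀ (u : ℤ) (w : M), χb u w = S.ψb 1 u w + ∑ᶠ m : ℤ, S.γ m (S.ψb 0 (u - m) w))
    (hk : S.Killed N v) (hN : 2 ≤ N) (hn1 : n + 2 ≤ N) (hn2 : 2 - n ≤ N) (r : ℤ) :
    χ r (χb (n + 1 - r) v) =
      (-(S.ψb 1 (n + 1 - r) (S.ψ 0 r v)))
      + (((if 1 ≤ r then 1 else 0) - (if n + 1 ≤ r then 1 else 0) : ℤ) • S.γ n v)
      - (∑ p ∈ Finset.Ioo (n + 1 - r - N) N,
          S.γ p (if 1 ≤ r then S.ψb 0 (n + 1 - r - p) (S.ψ 0 r v)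
            else -(S.ψ 0 r (S.ψb 0 (n + 1 - r - p) v))))
      + (∑ m ∈ insert n (Finset.Ioo (r - max N (N + 1 - n + r)) (max N (N + 1 - n + r))),
          S.γ m (if 1 ≤ r - m then S.ψb 1 (n + 1 - r) (S.ψ 1 (r - m) v)
            else -(S.ψ 1 (r - m) (S.ψb 1 (n + 1 - r) v))))
      + (∑ m ∈ insert n (Finset.Ioo (r - max N (N + 1 - n + r)) (max N (N + 1 - n + r))),
          ∑ p ∈ Finset.Ioo (n + 1 - r - N) N,
          S.γ m (S.γ p (S.ψb 0 (n + 1 - r - p) (S.ψ 1 (r - m) v)))) := by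
  set N4 := max N (N + 1 - n + r) with hN4
  have hN4a : N ≤ N4 := le_max_left _ _
  set SB : Finset ℤ := Finset.Ioo (n + 1 - r - N) N with hSB
  set SC : Finset ℤ := insert n (Finset.Ioo (r - N4) N4) with hSC
  -- expansion of χb
  have hb : χb (n + 1 - r) v
      = S.ψb 1 (n + 1 - r) v + ∑ p ∈ SB, S.γ p (S.ψb 0 (n + 1 - r - p) v) := by
    rw [hχb, S.Xbsum hk 0 (n + 1 - r) (Finset.Subset.refl _)]
  -- killed bound for χb (n+1-r) v
  have hkb : S.Killed N4 (χb (n + 1 - r) v) := by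
    rw [hb]
    refine Killed.add ((hk.ψbA 1 (n + 1 - r)).mono ?_)
      (killed_sum _ _ fun p hp => ((hk.ψbA 0 (n + 1 - r - p)).γA p).mono ?_)
    · simp only [hN4, max_le_iff, le_max_iff]; omega
    · rw [hSB, Finset.mem_Ioo] at hp
      simp only [hN4, max_le_iff, le_max_iff]; omega
  rw [hχ r, S.Xsum hkb 1 r (show Finset.Ioo (r - N4) N4 ⊆ SC from Finset.subset_insert _ _), hb]
  rw [map_add, map_sum]
  have hsplit : ∀ m ∈ SC,
      S.γ m (S.ψ 1 (r - m) (S.ψb 1 (n + 1 - r) v + ∑ p ∈ SB, S.γ p (S.ψb 0 (n + 1 - r - p) v)))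
      = S.γ m (S.ψ 1 (r - m) (S.ψb 1 (n + 1 - r) v))
        + ∑ p ∈ SB, S.γ m (S.ψ 1 (r - m) (S.γ p (S.ψb 0 (n + 1 - r - p) v))) := by
    intro m _
    rw [map_add, map_add, map_sum, map_sum]
  rw [Finset.sum_congr rfl hsplit, Finset.sum_add_distrib]
  -- term 1
  have e1 : S.ψ 0 r (S.ψb 1 (n + 1 - r) v) = -(S.ψb 1 (n + 1 - r) (S.ψ 0 r v)) := by
    rw [S.ψψb_swap 0 1 r (n + 1 - r) v, if_neg (fun hc => absurd hc.1 (by decide)), zero_sub]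
  -- term 2 : B
  have e2 : ∀ p ∈ SB, S.ψ 0 r (S.γ p (S.ψb 0 (n + 1 - r - p) v))
      = (if p = n then S.γ n v else 0)
        - S.γ p (if 1 ≤ r then S.ψb 0 (n + 1 - r - p) (S.ψ 0 r v)
            else -(S.ψ 0 r (S.ψb 0 (n + 1 - r - p) v)))
        - (if p = n ∧ r ≤ 0 then S.γ n v else 0) := by
    intro p _
    rw [← S.γψ_swap]
    by_cases hr1 : 1 ≤ r
    · rw [if_pos hr1, if_neg (by omega : ¬(p = n ∧ r ≤ 0)), sub_zero,
        S.ψψb_swap 0 0 r (n + 1 - r - p) v, map_sub, map_ite_zero]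
      congr 1
      by_cases hp : p = n
      · rw [if_pos ⟨rfl, by omega⟩, if_pos hp, hp]
      · rw [if_neg (fun hc => hp (by omega)), if_neg hp]
    · rw [if_neg hr1, map_neg, sub_neg_eq_add]
      have hiff : (p = n ∧ r ≤ 0) ↔ (p = n) := and_iff_left (by omega)
      rw [if_congr hiff rfl rfl]
      by_cases hp : p = n
      · rw [if_pos hp, hp]; abel
      · rw [if_neg hp]; abel
  -- term 3 : C
  have e3 : ∀ m ∈ SC, S.γ m (S.ψ 1 (r - m) (S.ψb 1 (n + 1 - r) v))
      = (if m = n then S.γ n v else 0)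
        - S.γ m (if 1 ≤ r - m then S.ψb 1 (n + 1 - r) (S.ψ 1 (r - m) v)
            else -(S.ψ 1 (r - m) (S.ψb 1 (n + 1 - r) v)))
        - (if m = n ∧ r ≤ n then S.γ n v else 0) := by
    intro m _
    by_cases hr1 : 1 ≤ r - m
    · rw [if_pos hr1, if_neg (by omega : ¬(m = n ∧ r ≤ n)), sub_zero,
        S.ψψb_swap 1 1 (r - m) (n + 1 - r) v, map_sub, map_ite_zero]
      congr 1
      by_cases hp : m = n
      · rw [if_pos ⟨rfl, by omega⟩, if_pos hp, hp]
      · rw [if_neg (fun hc => hp (by omega)), if_neg hp]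
    · rw [if_neg hr1, map_neg, sub_neg_eq_add]
      have hiff : (m = n ∧ r ≤ n) ↔ (m = n) := by
        constructor
        · exact fun h => h.1
        · intro h; subst h; exact ⟨rfl, by omega⟩
      rw [if_congr hiff rfl rfl]
      by_cases hp : m = n
      · rw [if_pos hp, hp]; abel
      · rw [if_neg hp]; abel
  -- term 4 : D
  have e4 : ∀ m ∈ SC, ∀ p ∈ SB, S.γ m (S.ψ 1 (r - m) (S.γ p (S.ψb 0 (n + 1 - r - p) v)))
      = -(S.γ m (S.γ p (S.ψb 0 (n + 1 - r - p) (S.ψ 1 (r - m) v)))) := by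
    intro m _ p _
    rw [← S.γψ_swap p 1 (r - m), S.ψψb_swap 1 0 (r - m) (n + 1 - r - p) v,
      if_neg (fun hc => absurd hc.1 (by decide)), zero_sub, map_neg, map_neg]
  rw [e1, Finset.sum_congr rfl e2, Finset.sum_congr rfl e3,
    Finset.sum_congr rfl (fun m hm => Finset.sum_congr rfl (e4 m hm))]
  rw [Finset.sum_sub_distrib, Finset.sum_sub_distrib, Finset.sum_sub_distrib,
    Finset.sum_sub_distrib]
  simp only [Finset.sum_neg_distrib]
  -- collapse the delta sums
  have hmem : (n ∈ SB) ↔ (2 - N ≤ r) := by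
    simp only [hSB, Finset.mem_Ioo]; omega
  have d1 : ∑ p ∈ SB, (if p = n then S.γ n v else 0)
      = (if 2 - N ≤ r then (1:ℤ) else 0) • S.γ n v := by
    rw [Finset.sum_ite_eq' SB n (fun _ => S.γ n v)]
    by_cases h1 : 2 - N ≤ r
    · rw [if_pos (hmem.mpr h1), if_pos h1, one_smul]
    · rw [if_neg (fun hc => h1 (hmem.mp hc)), if_neg h1, zero_smul]
  have d2 : ∑ p ∈ SB, (if p = n ∧ r ≤ 0 then S.γ n v else 0)
      = (if 2 - N ≤ r ∧ r ≤ 0 then (1:ℤ) else 0) • S.γ n v := by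
    have hsplit2 : ∀ p : ℤ, (if p = n ∧ r ≤ 0 then S.γ n v else 0)
        = (if p = n then (if r ≤ 0 then S.γ n v else 0) else 0) := by
      intro p
      by_cases hp : p = n
      · rw [if_pos hp]
        by_cases h2 : r ≤ 0
        · rw [if_pos ⟨hp, h2⟩, if_pos h2]
        · rw [if_neg (fun hc => h2 hc.2), if_neg h2]
      · rw [if_neg (fun hc => hp hc.1), if_neg hp]
    rw [Finset.sum_congr rfl (fun p _ => hsplit2 p),
      Finset.sum_ite_eq' SB n (fun _ => if r ≤ 0 then S.γ n v else 0)]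
    by_cases h1 : 2 - N ≤ r
    · rw [if_pos (hmem.mpr h1)]
      by_cases h2 : r ≤ 0
      · rw [if_pos h2, if_pos ⟨h1, h2⟩, one_smul]
      · rw [if_neg h2, if_neg (fun hc => h2 hc.2), zero_smul]
    · rw [if_neg (fun hc => h1 (hmem.mp hc)), if_neg (fun hc => h1 hc.1), zero_smul]
  have d3 : ∑ m ∈ SC, (if m = n then S.γ n v else 0) = S.γ n v := by
    rw [Finset.sum_ite_eq' SC n (fun _ => S.γ n v),
      if_pos (Finset.mem_insert_self _ _)]
  have d4 : ∑ m ∈ SC, (if m = n ∧ r ≤ n then S.γ n v else 0)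
      = (if r ≤ n then (1:ℤ) else 0) • S.γ n v := by
    have hsplit4 : ∀ m : ℤ, (if m = n ∧ r ≤ n then S.γ n v else 0)
        = (if m = n then (if r ≤ n then S.γ n v else 0) else 0) := by
      intro m
      by_cases hp : m = n
      · rw [if_pos hp]
        by_cases h2 : r ≤ n
        · rw [if_pos ⟨hp, h2⟩, if_pos h2]
        · rw [if_neg (fun hc => h2 hc.2), if_neg h2]
      · rw [if_neg (fun hc => hp hc.1), if_neg hp]
    rw [Finset.sum_congr rfl (fun m _ => hsplit4 m),
      Finset.sum_ite_eq' SC n (fun _ => if r ≤ n then S.γ n v else 0),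
      if_pos (Finset.mem_insert_self _ _)]
    by_cases h2 : r ≤ n
    · rw [if_pos h2, if_pos h2, one_smul]
    · rw [if_neg h2, if_neg h2, zero_smul]
  rw [d1, d2, d3, d4]
  -- final scalar bookkeeping
  have hc : ((if 1 ≤ r then 1 else 0) - (if n + 1 ≤ r then 1 else 0) : ℤ)
      = ((if 2 - N ≤ r then (1:ℤ) else 0) - (if 2 - N ≤ r ∧ r ≤ 0 then (1:ℤ) else 0)
          - 1 + (if r ≤ n then (1:ℤ) else 0)) := by
    split_ifs <;> omega
  rw [hc, add_smul, sub_smul, sub_smul, one_smul]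
  abel

set_option maxHeartbeats 1000000 in
lemma main1 {n : ℤ} {v : M} {N : ℤ}
    (χ χb : ℤ → Module.End ℂ M)
    (hχ : ∀ (u : ℤ) (w : M), χ u w = S.ψ 0 u w - ∑ᶠ m : ℤ, S.γ m (S.ψ 1 (u - m) w))
    (hχb : ∀ (u : ℤ) (w : M), χb u w = S.ψb 1 u w + ∑ᶠ m : ℤ, S.γ m (S.ψb 0 (u - m) w))
    (hanti : ∀ r s : ℤ, χb r * χ s + χ s * χb r = 0)
    (hk : S.Killed N v) (hN : 2 ≤ N) (hn1 : n + 2 ≤ N) (hn2 : 2 - n ≤ N) :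
    ∑ᶠ r : ℤ, χ r (χb (n + 1 - r) v)
      = (∑ᶠ pq : ℤ × ℤ, S.γ pq.1 (S.γ pq.2
            (∑ᶠ a : ℤ, S.ψb 0 a (S.ψ 1 (n - pq.1 - pq.2 + 1 - a) v))))
        - (∑ᶠ p : ℤ, S.γ p (∑ᶠ a : ℤ,
            ((if 1 ≤ n - p + 1 - a then S.ψb 0 a (S.ψ 0 (n - p + 1 - a) v)
               else -(S.ψ 0 (n - p + 1 - a) (S.ψb 0 a v)))
             - (if 1 ≤ n - p + 1 - a then S.ψb 1 a (S.ψ 1 (n - p + 1 - a) v)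
               else -(S.ψ 1 (n - p + 1 - a) (S.ψb 1 a v))))))
        - (∑ᶠ a : ℤ, S.ψb 1 a (S.ψ 0 (n + 1 - a) v)) + (n : ℂ) • S.γ n v := by
  classical
  set R : Finset ℤ := Finset.Icc (n + 2 - 2*N) (2*N - 2) with hR
  set Q : Finset ℤ := Finset.Icc (-(9*N)) (9*N) with hQ
  set Q2 : Finset ℤ := Finset.Icc (-(20*N)) (20*N) with hQ2
  -- kill helpers
  have killγ : ∀ (p : ℤ) (i j : Fin 2) (a b : ℤ), N ≤ p →
      S.γ p (S.ψb i a (S.ψ j b v)) = 0 := by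
    intro p i j a b hp
    rw [S.γψb_swap, S.γψ_swap, hk.γ_eq hp, map_zero, map_zero]
  have killγ' : ∀ (p : ℤ) (i j : Fin 2) (a b : ℤ), N ≤ p →
      S.γ p (S.ψ j b (S.ψb i a v)) = 0 := by
    intro p i j a b hp
    rw [S.γψ_swap, S.γψb_swap, hk.γ_eq hp, map_zero, map_zero]
  have killne : ∀ (i j : Fin 2) (a b : ℤ), ¬ j = i → N ≤ a →
      S.ψb i a (S.ψ j b v) = 0 := by
    intro i j a b hij ha
    rw [S.ψbψ_swap i j a b v, if_neg (fun hc => hij hc.1), zero_sub,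
      hk.ψb_eq i ha, map_zero, neg_zero]
  have killsame : ∀ (i : Fin 2) (a b : ℤ), N ≤ a → 1 ≤ b →
      S.ψb i a (S.ψ i b v) = 0 := by
    intro i a b ha hb
    rw [S.ψbψ_swap i i a b v, if_neg (fun hc => by omega), zero_sub,
      hk.ψb_eq i ha, map_zero, neg_zero]
  -- Step 0 : truncate the outer finsum
  have hsupp0 : (Function.support fun r => χ r (χb (n + 1 - r) v)) ⊆ ↑R := by
    rw [Function.support_subset_iff']
    intro r hr
    rw [Finset.mem_coe, hR, Finset.mem_Icc, not_and_or] at hr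
    rcases hr with hr | hr
    · have : χb (n + 1 - r) v = 0 := chib_vanish χb hχb hk (by omega) (by omega)
      rw [this, map_zero]
    · have h1 : χ r v = 0 := chi_vanish χ hχ hk (by omega) (by omega)
      have h2 := DFunLike.congr_fun (hanti (n + 1 - r) r) v
      simp only [LinearMap.add_apply, Module.End.mul_apply, LinearMap.zero_apply] at h2
      rw [h1, map_zero, zero_add] at h2
      exact h2
  rw [finsum_eq_sum_of_support_subset _ hsupp0,
    Finset.sum_congr rfl (fun r _ => hexp_aux χ χb hχ hχb hk hN hn1 hn2 r),
    Finset.sum_add_distrib, Finset.sum_add_distrib, Finset.sum_sub_distrib,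
    Finset.sum_add_distrib]
  -- Block Km
  have hA : ∑ r ∈ R, -(S.ψb 1 (n + 1 - r) (S.ψ 0 r v))
      = -∑ᶠ a, S.ψb 1 a (S.ψ 0 (n + 1 - a) v) := by
    rw [Finset.sum_neg_distrib]
    congr 1
    have hout : (∑ᶠ a, S.ψb 1 a (S.ψ 0 (n + 1 - a) v))
        = ∑ a ∈ Finset.Icc (n + 3 - 2*N) (2*N - 1), S.ψb 1 a (S.ψ 0 (n + 1 - a) v) := by
      refine finsum_eq_sum_of_support_subset _ ?_
      rw [Function.support_subset_iff']
      intro a ha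
      rw [Finset.mem_coe, Finset.mem_Icc, not_and_or] at ha
      rcases ha with ha | ha
      · rw [hk.ψ_eq 0 (by omega), map_zero]
      · exact killne 1 0 a (n + 1 - a) (by decide) (by omega)
    rw [hout]
    refine Finset.sum_nbij' (fun r => n + 1 - r) (fun a => n + 1 - a) ?_ ?_ ?_ ?_ ?_
    · intro r hrm; rw [hR, Finset.mem_Icc] at hrm; rw [Finset.mem_Icc]; omega
    · intro a ham; rw [Finset.mem_Icc] at ham; rw [hR, Finset.mem_Icc]; omega
    · intro r _; omega
    · intro a _; omega
    · intro r _
      have : n + 1 - (n + 1 - r) = r := by ring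
      rw [this]
  -- Block delta
  have hδ : ∑ r ∈ R, (((if 1 ≤ r then 1 else 0) - (if n + 1 ≤ r then 1 else 0) : ℤ) • S.γ n v)
      = (n : ℂ) • S.γ n v := by
    rw [← Finset.sum_smul]
    have e1 : ∀ r ∈ R, ((if 1 ≤ r then 1 else 0) - (if n + 1 ≤ r then 1 else 0) : ℤ)
        = ((if r ∈ Finset.Icc (1:ℤ) (2*N - 2) then (1:ℤ) else 0)
           - (if r ∈ Finset.Icc (n + 1) (2*N - 2) then (1:ℤ) else 0)) := by
      intro r hrm
      rw [hR, Finset.mem_Icc] at hrm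
      congr 1
      · by_cases h1 : 1 ≤ r
        · rw [if_pos h1, if_pos (Finset.mem_Icc.mpr ⟨h1, by omega⟩)]
        · rw [if_neg h1, if_neg (fun hc => h1 (Finset.mem_Icc.mp hc).1)]
      · by_cases h1 : n + 1 ≤ r
        · rw [if_pos h1, if_pos (Finset.mem_Icc.mpr ⟨h1, by omega⟩)]
        · rw [if_neg h1, if_neg (fun hc => h1 (Finset.mem_Icc.mp hc).1)]
    rw [Finset.sum_congr rfl e1, Finset.sum_sub_distrib,
      Finset.sum_ite_mem R (Finset.Icc (1:ℤ) (2*N-2)) (fun _ => (1:ℤ)),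
      Finset.sum_ite_mem R (Finset.Icc (n+1) (2*N-2)) (fun _ => (1:ℤ))]
    have i1 : R ∩ Finset.Icc (1:ℤ) (2*N-2) = Finset.Icc (1:ℤ) (2*N-2) := by
      refine Finset.ext fun x => ?_
      simp only [Finset.mem_inter, hR, Finset.mem_Icc]
      omega
    have i2 : R ∩ Finset.Icc (n+1) (2*N-2) = Finset.Icc (n+1) (2*N-2) := by
      refine Finset.ext fun x => ?_
      simp only [Finset.mem_inter, hR, Finset.mem_Icc]
      omega
    rw [i1, i2, Finset.sum_const, Finset.sum_const, Int.card_Icc, Int.card_Icc,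
      nsmul_eq_mul, nsmul_eq_mul, mul_one, mul_one]
    have c1 : ((2*N - 2 + 1 - 1).toNat : ℤ) = 2*N - 2 := by omega
    have c2 : ((2*N - 2 + 1 - (n+1)).toNat : ℤ) = 2*N - 2 - n := by omega
    rw [c1, c2]
    have : (2*N - 2 - (2*N - 2 - n) : ℤ) = n := by ring
    rw [this, Int.cast_smul_eq_zsmul ℂ n (S.γ n v)]
  -- more kill helpers for normal-ordered terms
  have killF : ∀ (i : Fin 2) (p a b : ℤ), N ≤ p →
      S.γ p (if 1 ≤ b then S.ψb i a (S.ψ i b v) else -(S.ψ i b (S.ψb i a v))) = 0 := by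
    intro i p a b hp
    by_cases hc : 1 ≤ b
    · rw [if_pos hc, killγ p i i a b hp]
    · rw [if_neg hc, map_neg, killγ' p i i a b hp, neg_zero]
  have killA : ∀ (i : Fin 2) (a b : ℤ), N ≤ a →
      (if 1 ≤ b then S.ψb i a (S.ψ i b v) else -(S.ψ i b (S.ψb i a v))) = 0 := by
    intro i a b ha
    by_cases hc : 1 ≤ b
    · rw [if_pos hc, killsame i a b ha hc]
    · rw [if_neg hc, hk.ψb_eq i ha, map_zero, neg_zero]
  have killB : ∀ (i : Fin 2) (a b : ℤ), N ≤ b →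
      (if 1 ≤ b then S.ψb i a (S.ψ i b v) else -(S.ψ i b (S.ψb i a v))) = 0 := by
    intro i a b hb
    rw [if_pos (by omega), hk.ψ_eq i hb, map_zero]
  -- Block Kp
  have hKpR : (∑ᶠ pq : ℤ × ℤ, S.γ pq.1 (S.γ pq.2
        (∑ᶠ a : ℤ, S.ψb 0 a (S.ψ 1 (n - pq.1 - pq.2 + 1 - a) v))))
      = ∑ m ∈ Q, ∑ p ∈ Q, ∑ a ∈ Q2,
          S.γ m (S.γ p (S.ψb 0 a (S.ψ 1 (n - m - p + 1 - a) v))) := by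
    have hin : ∀ m p : ℤ, (∑ᶠ a, S.ψb 0 a (S.ψ 1 (n - m - p + 1 - a) v))
        = ∑ a ∈ Finset.Ioo (n - m - p + 1 - N) N, S.ψb 0 a (S.ψ 1 (n - m - p + 1 - a) v) := by
      intro m p
      refine finsum_eq_sum_of_support_subset _ ?_
      rw [Function.support_subset_iff']
      intro a ha
      rw [Finset.mem_coe, Finset.mem_Ioo, not_and_or, not_lt, not_lt] at ha
      rcases ha with ha | ha
      · rw [hk.ψ_eq 1 (by omega), map_zero]
      · exact killne 0 1 a _ (by decide) ha
    have hsuppP : (Function.support fun pq : ℤ × ℤ => S.γ pq.1 (S.γ pq.2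
        (∑ᶠ a : ℤ, S.ψb 0 a (S.ψ 1 (n - pq.1 - pq.2 + 1 - a) v)))) ⊆ ↑(Q ×ˢ Q) := by
      rw [Function.support_subset_iff']
      rintro ⟨m, p⟩ hmp
      simp only [Finset.coe_product, Set.mem_prod, Finset.mem_coe, hQ, Finset.mem_Icc,
        not_and_or] at hmp
      by_cases hp' : N ≤ p
      · rw [hin m p, map_sum, map_sum]
        refine Finset.sum_eq_zero fun a _ => ?_
        rw [killγ p 0 1 _ _ hp', map_zero]
      · by_cases hm' : N ≤ m
        · rw [hin m p, map_sum, map_sum]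
          refine Finset.sum_eq_zero fun a _ => ?_
          rw [S.γγ_swap, killγ m 0 1 _ _ hm', map_zero]
        · rw [hin m p, Finset.Ioo_eq_empty (by omega), Finset.sum_empty, map_zero, map_zero]
    rw [finsum_eq_sum_of_support_subset _ hsuppP, Finset.sum_product]
    refine Finset.sum_congr rfl fun m hm => Finset.sum_congr rfl fun p hp => ?_
    rw [hQ, Finset.mem_Icc] at hm hp
    have hsub23 : Finset.Ioo (n - m - p + 1 - N) N ⊆ Q2 := by
      intro a ha; rw [Finset.mem_Ioo] at ha; rw [hQ2, Finset.mem_Icc]; omega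
    have hz23 : ∀ a ∈ Q2, a ∉ Finset.Ioo (n - m - p + 1 - N) N →
        S.ψb 0 a (S.ψ 1 (n - m - p + 1 - a) v) = 0 := by
      intro a _ hna
      rw [Finset.mem_Ioo, not_and_or, not_lt, not_lt] at hna
      rcases hna with h | h
      · rw [hk.ψ_eq 1 (by omega), map_zero]
      · rw [killne 0 1 a _ (by decide) h]
    rw [hin m p, Finset.sum_subset hsub23 hz23, map_sum, map_sum]
  have hD : ∑ r ∈ R, (∑ m ∈ insert n (Finset.Ioo (r - max N (N + 1 - n + r)) (max N (N + 1 - n + r))),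
        ∑ p ∈ Finset.Ioo (n + 1 - r - N) N,
          S.γ m (S.γ p (S.ψb 0 (n + 1 - r - p) (S.ψ 1 (r - m) v))))
      = ∑ᶠ pq : ℤ × ℤ, S.γ pq.1 (S.γ pq.2
          (∑ᶠ a : ℤ, S.ψb 0 a (S.ψ 1 (n - pq.1 - pq.2 + 1 - a) v))) := by
    have h1 : ∀ r ∈ R, (∑ m ∈ insert n (Finset.Ioo (r - max N (N + 1 - n + r)) (max N (N + 1 - n + r))),
          ∑ p ∈ Finset.Ioo (n + 1 - r - N) N,
            S.γ m (S.γ p (S.ψb 0 (n + 1 - r - p) (S.ψ 1 (r - m) v))))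
        = ∑ m ∈ Q, ∑ p ∈ Q, S.γ m (S.γ p (S.ψb 0 (n + 1 - r - p) (S.ψ 1 (r - m) v))) := by
      intro r hrm
      rw [hR, Finset.mem_Icc] at hrm
      have hN4a : N ≤ max N (N + 1 - n + r) := le_max_left _ _
      have hN4b : max N (N + 1 - n + r) ≤ 4*N := max_le (by omega) (by omega)
      have hPz : ∀ m : ℤ, ∀ p ∈ Q, p ∉ Finset.Ioo (n + 1 - r - N) N →
          S.γ m (S.γ p (S.ψb 0 (n + 1 - r - p) (S.ψ 1 (r - m) v))) = 0 := by
        intro m p _ hnp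
        rw [Finset.mem_Ioo, not_and_or, not_lt, not_lt] at hnp
        rcases hnp with h | h
        · rw [killne 0 1 (n + 1 - r - p) (r - m) (by decide) (by omega), map_zero, map_zero]
        · rw [killγ p 0 1 _ _ h, map_zero]
      have hPsub : Finset.Ioo (n + 1 - r - N) N ⊆ Q := by
        intro p hp; rw [Finset.mem_Ioo] at hp; rw [hQ, Finset.mem_Icc]; omega
      have hMsub : insert n (Finset.Ioo (r - max N (N + 1 - n + r)) (max N (N + 1 - n + r))) ⊆ Q := by
        intro m hm
        rcases Finset.mem_insert.mp hm with h | h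
        · rw [h, hQ, Finset.mem_Icc]; omega
        · rw [Finset.mem_Ioo] at h; rw [hQ, Finset.mem_Icc]; omega
      have hMz : ∀ m ∈ Q, m ∉ insert n (Finset.Ioo (r - max N (N + 1 - n + r)) (max N (N + 1 - n + r))) →
          (∑ p ∈ Q, S.γ m (S.γ p (S.ψb 0 (n + 1 - r - p) (S.ψ 1 (r - m) v)))) = 0 := by
        intro m _ hm
        simp only [Finset.mem_insert, Finset.mem_Ioo, not_or, not_and_or, not_lt] at hm
        rcases hm.2 with h | h
        · refine Finset.sum_eq_zero fun p _ => ?_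
          rw [hk.ψ_eq 1 (by omega), map_zero, map_zero, map_zero]
        · refine Finset.sum_eq_zero fun p _ => ?_
          rw [S.γγ_swap, killγ m 0 1 _ _ (by omega), map_zero]
      rw [Finset.sum_congr rfl (fun m _ => Finset.sum_subset hPsub (hPz m)),
        Finset.sum_subset hMsub hMz]
    have h3 : ∀ m ∈ Q, ∀ p ∈ Q,
        ∑ r ∈ R, S.γ m (S.γ p (S.ψb 0 (n + 1 - r - p) (S.ψ 1 (r - m) v)))
        = ∑ a ∈ Q2, S.γ m (S.γ p (S.ψb 0 a (S.ψ 1 (n - m - p + 1 - a) v))) := by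
      intro m hm p hp
      rw [hQ, Finset.mem_Icc] at hm hp
      have e1 : ∑ r ∈ R, S.γ m (S.γ p (S.ψb 0 (n + 1 - r - p) (S.ψ 1 (r - m) v)))
          = ∑ a ∈ Finset.Icc (n + 3 - 2*N - p) (2*N - 1 - p),
              S.γ m (S.γ p (S.ψb 0 a (S.ψ 1 (n - m - p + 1 - a) v))) := by
        refine Finset.sum_nbij' (fun r => n + 1 - r - p) (fun a => n + 1 - a - p) ?_ ?_ ?_ ?_ ?_
        · intro r hr; rw [hR, Finset.mem_Icc] at hr; rw [Finset.mem_Icc]; omega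
        · intro a ha; rw [Finset.mem_Icc] at ha; rw [hR, Finset.mem_Icc]; omega
        · intro r _; omega
        · intro a _; omega
        · intro r _
          have h1' : n - m - p + 1 - (n + 1 - r - p) = r - m := by ring
          rw [h1']
      rw [e1]
      have hsub24 : Finset.Icc (n + 3 - 2*N - p) (2*N - 1 - p) ⊆ Q2 := by
        intro a ha; rw [Finset.mem_Icc] at ha; rw [hQ2, Finset.mem_Icc]; omega
      refine Finset.sum_subset hsub24 ?_
      intro a ha hna
      rw [hQ2, Finset.mem_Icc] at ha
      rw [Finset.mem_Icc, not_and_or, not_le, not_le] at hna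
      by_cases hm' : N ≤ m
      · rw [S.γγ_swap, killγ m 0 1 _ _ hm', map_zero]
      · by_cases hp' : N ≤ p
        · rw [killγ p 0 1 _ _ hp', map_zero]
        · by_cases ha' : N ≤ a
          · rw [killne 0 1 a _ (by decide) ha', map_zero, map_zero]
          · by_cases hb' : N ≤ n - m - p + 1 - a
            · rw [hk.ψ_eq 1 hb', map_zero, map_zero, map_zero]
            · exfalso; omega
    rw [Finset.sum_congr rfl h1, Finset.sum_comm,
      Finset.sum_congr rfl (fun m _ => Finset.sum_comm),
      Finset.sum_congr rfl (fun m hm => Finset.sum_congr rfl (fun p hp => h3 m hm p hp)),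
      ← hKpR]
  -- Block K0, piece 0
  have hP0 : ∑ r ∈ R, (∑ p ∈ Finset.Ioo (n + 1 - r - N) N,
        S.γ p (if 1 ≤ r then S.ψb 0 (n + 1 - r - p) (S.ψ 0 r v)
          else -(S.ψ 0 r (S.ψb 0 (n + 1 - r - p) v))))
      = ∑ p ∈ Q, ∑ a ∈ Q2,
          S.γ p (if 1 ≤ n - p + 1 - a then S.ψb 0 a (S.ψ 0 (n - p + 1 - a) v)
            else -(S.ψ 0 (n - p + 1 - a) (S.ψb 0 a v))) := by
    have h1 : ∀ r ∈ R, (∑ p ∈ Finset.Ioo (n + 1 - r - N) N,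
          S.γ p (if 1 ≤ r then S.ψb 0 (n + 1 - r - p) (S.ψ 0 r v)
            else -(S.ψ 0 r (S.ψb 0 (n + 1 - r - p) v))))
        = ∑ p ∈ Q, S.γ p (if 1 ≤ r then S.ψb 0 (n + 1 - r - p) (S.ψ 0 r v)
            else -(S.ψ 0 r (S.ψb 0 (n + 1 - r - p) v))) := by
      intro r hrm
      rw [hR, Finset.mem_Icc] at hrm
      have hsub : Finset.Ioo (n + 1 - r - N) N ⊆ Q := by
        intro p hp; rw [Finset.mem_Ioo] at hp; rw [hQ, Finset.mem_Icc]; omega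
      refine Finset.sum_subset hsub ?_
      intro p _ hnp
      rw [Finset.mem_Ioo, not_and_or, not_lt, not_lt] at hnp
      rcases hnp with h | h
      · rw [killA 0 (n + 1 - r - p) r (by omega), map_zero]
      · rw [killF 0 p (n + 1 - r - p) r h]
    rw [Finset.sum_congr rfl h1, Finset.sum_comm]
    refine Finset.sum_congr rfl fun p hp => ?_
    rw [hQ, Finset.mem_Icc] at hp
    have e1 : ∑ r ∈ R, S.γ p (if 1 ≤ r then S.ψb 0 (n + 1 - r - p) (S.ψ 0 r v)
          else -(S.ψ 0 r (S.ψb 0 (n + 1 - r - p) v)))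
        = ∑ a ∈ Finset.Icc (n + 3 - 2*N - p) (2*N - 1 - p),
            S.γ p (if 1 ≤ n - p + 1 - a then S.ψb 0 a (S.ψ 0 (n - p + 1 - a) v)
              else -(S.ψ 0 (n - p + 1 - a) (S.ψb 0 a v))) := by
      refine Finset.sum_nbij' (fun r => n + 1 - r - p) (fun a => n + 1 - a - p) ?_ ?_ ?_ ?_ ?_
      · intro r hr; rw [hR, Finset.mem_Icc] at hr; rw [Finset.mem_Icc]; omega
      · intro a ha; rw [Finset.mem_Icc] at ha; rw [hR, Finset.mem_Icc]; omega
      · intro r _; omega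
      · intro a _; omega
      · intro r _
        have h1' : n - p + 1 - (n + 1 - r - p) = r := by ring
        rw [h1']
    rw [e1]
    have hsub2 : Finset.Icc (n + 3 - 2*N - p) (2*N - 1 - p) ⊆ Q2 := by
      intro a ha; rw [Finset.mem_Icc] at ha; rw [hQ2, Finset.mem_Icc]; omega
    refine Finset.sum_subset hsub2 ?_
    intro a ha hna
    rw [hQ2, Finset.mem_Icc] at ha
    rw [Finset.mem_Icc, not_and_or, not_le, not_le] at hna
    by_cases hp' : N ≤ p
    · rw [killF 0 p a _ hp']
    · by_cases ha' : N ≤ a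
      · rw [killA 0 a _ ha', map_zero]
      · by_cases hb' : N ≤ n - p + 1 - a
        · rw [killB 0 a _ hb', map_zero]
        · exfalso; omega
  -- Block K0, piece 1
  have hP1 : ∑ r ∈ R, (∑ m ∈ insert n (Finset.Ioo (r - max N (N + 1 - n + r)) (max N (N + 1 - n + r))),
        S.γ m (if 1 ≤ r - m then S.ψb 1 (n + 1 - r) (S.ψ 1 (r - m) v)
          else -(S.ψ 1 (r - m) (S.ψb 1 (n + 1 - r) v))))
      = ∑ p ∈ Q, ∑ a ∈ Q2,
          S.γ p (if 1 ≤ n - p + 1 - a then S.ψb 1 a (S.ψ 1 (n - p + 1 - a) v)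
            else -(S.ψ 1 (n - p + 1 - a) (S.ψb 1 a v))) := by
    have h1 : ∀ r ∈ R, (∑ m ∈ insert n (Finset.Ioo (r - max N (N + 1 - n + r)) (max N (N + 1 - n + r))),
          S.γ m (if 1 ≤ r - m then S.ψb 1 (n + 1 - r) (S.ψ 1 (r - m) v)
            else -(S.ψ 1 (r - m) (S.ψb 1 (n + 1 - r) v))))
        = ∑ m ∈ Q, S.γ m (if 1 ≤ r - m then S.ψb 1 (n + 1 - r) (S.ψ 1 (r - m) v)
            else -(S.ψ 1 (r - m) (S.ψb 1 (n + 1 - r) v))) := by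
      intro r hrm
      rw [hR, Finset.mem_Icc] at hrm
      have hN4a : N ≤ max N (N + 1 - n + r) := le_max_left _ _
      have hN4b : max N (N + 1 - n + r) ≤ 4*N := max_le (by omega) (by omega)
      have hsub : insert n (Finset.Ioo (r - max N (N + 1 - n + r)) (max N (N + 1 - n + r))) ⊆ Q := by
        intro m hm
        rcases Finset.mem_insert.mp hm with h | h
        · rw [h, hQ, Finset.mem_Icc]; omega
        · rw [Finset.mem_Ioo] at h; rw [hQ, Finset.mem_Icc]; omega
      refine Finset.sum_subset hsub ?_
      intro m _ hm
      simp only [Finset.mem_insert, Finset.mem_Ioo, not_or, not_and_or, not_lt] at hm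
      rcases hm.2 with h | h
      · rw [killB 1 (n + 1 - r) (r - m) (by omega), map_zero]
      · rw [killF 1 m (n + 1 - r) (r - m) (by omega)]
    rw [Finset.sum_congr rfl h1, Finset.sum_comm]
    refine Finset.sum_congr rfl fun m hm => ?_
    rw [hQ, Finset.mem_Icc] at hm
    have e1 : ∑ r ∈ R, S.γ m (if 1 ≤ r - m then S.ψb 1 (n + 1 - r) (S.ψ 1 (r - m) v)
          else -(S.ψ 1 (r - m) (S.ψb 1 (n + 1 - r) v)))
        = ∑ a ∈ Finset.Icc (n + 3 - 2*N) (2*N - 1),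
            S.γ m (if 1 ≤ n - m + 1 - a then S.ψb 1 a (S.ψ 1 (n - m + 1 - a) v)
              else -(S.ψ 1 (n - m + 1 - a) (S.ψb 1 a v))) := by
      refine Finset.sum_nbij' (fun r => n + 1 - r) (fun a => n + 1 - a) ?_ ?_ ?_ ?_ ?_
      · intro r hr; rw [hR, Finset.mem_Icc] at hr; rw [Finset.mem_Icc]; omega
      · intro a ha; rw [Finset.mem_Icc] at ha; rw [hR, Finset.mem_Icc]; omega
      · intro r _; omega
      · intro a _; omega
      · intro r _
        have h1' : n - m + 1 - (n + 1 - r) = r - m := by ring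
        rw [h1']
    rw [e1]
    have hsub2 : Finset.Icc (n + 3 - 2*N) (2*N - 1) ⊆ Q2 := by
      intro a ha; rw [Finset.mem_Icc] at ha; rw [hQ2, Finset.mem_Icc]; omega
    refine Finset.sum_subset hsub2 ?_
    intro a ha hna
    rw [hQ2, Finset.mem_Icc] at ha
    rw [Finset.mem_Icc, not_and_or, not_le, not_le] at hna
    by_cases hm' : N ≤ m
    · rw [killF 1 m a _ hm']
    · by_cases ha' : N ≤ a
      · rw [killA 1 a _ ha', map_zero]
      · by_cases hb' : N ≤ n - m + 1 - a
        · rw [killB 1 a _ hb', map_zero]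
        · exfalso; omega
  -- RHS K0 conversion
  have hz0 : ∀ p a : ℤ, a ∉ Finset.Ioo (n - p + 1 - N) N →
      ((if 1 ≤ n - p + 1 - a then S.ψb 0 a (S.ψ 0 (n - p + 1 - a) v)
          else -(S.ψ 0 (n - p + 1 - a) (S.ψb 0 a v)))
       - (if 1 ≤ n - p + 1 - a then S.ψb 1 a (S.ψ 1 (n - p + 1 - a) v)
          else -(S.ψ 1 (n - p + 1 - a) (S.ψb 1 a v)))) = 0 := by
    intro p a hna
    rw [Finset.mem_Ioo, not_and_or, not_lt, not_lt] at hna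
    rcases hna with h | h
    · rw [killB 0 a _ (by omega), killB 1 a _ (by omega), sub_zero]
    · rw [killA 0 a _ h, killA 1 a _ h, sub_zero]
  have hin0 : ∀ p : ℤ, (∑ᶠ a : ℤ,
      ((if 1 ≤ n - p + 1 - a then S.ψb 0 a (S.ψ 0 (n - p + 1 - a) v)
          else -(S.ψ 0 (n - p + 1 - a) (S.ψb 0 a v)))
       - (if 1 ≤ n - p + 1 - a then S.ψb 1 a (S.ψ 1 (n - p + 1 - a) v)
          else -(S.ψ 1 (n - p + 1 - a) (S.ψb 1 a v)))))
      = ∑ a ∈ Finset.Ioo (n - p + 1 - N) N,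
        ((if 1 ≤ n - p + 1 - a then S.ψb 0 a (S.ψ 0 (n - p + 1 - a) v)
          else -(S.ψ 0 (n - p + 1 - a) (S.ψb 0 a v)))
       - (if 1 ≤ n - p + 1 - a then S.ψb 1 a (S.ψ 1 (n - p + 1 - a) v)
          else -(S.ψ 1 (n - p + 1 - a) (S.ψb 1 a v)))) := by
    intro p
    refine finsum_eq_sum_of_support_subset _ ?_
    rw [Function.support_subset_iff']
    intro a ha
    exact hz0 p a (by simpa using ha)
  have hK0R : (∑ᶠ p : ℤ, S.γ p (∑ᶠ a : ℤ,
      ((if 1 ≤ n - p + 1 - a then S.ψb 0 a (S.ψ 0 (n - p + 1 - a) v)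
          else -(S.ψ 0 (n - p + 1 - a) (S.ψb 0 a v)))
       - (if 1 ≤ n - p + 1 - a then S.ψb 1 a (S.ψ 1 (n - p + 1 - a) v)
          else -(S.ψ 1 (n - p + 1 - a) (S.ψb 1 a v))))))
      = (∑ p ∈ Q, ∑ a ∈ Q2,
          S.γ p (if 1 ≤ n - p + 1 - a then S.ψb 0 a (S.ψ 0 (n - p + 1 - a) v)
            else -(S.ψ 0 (n - p + 1 - a) (S.ψb 0 a v))))
        - (∑ p ∈ Q, ∑ a ∈ Q2,
          S.γ p (if 1 ≤ n - p + 1 - a then S.ψb 1 a (S.ψ 1 (n - p + 1 - a) v)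
            else -(S.ψ 1 (n - p + 1 - a) (S.ψb 1 a v)))) := by
    have hsuppK : (Function.support fun p : ℤ => S.γ p (∑ᶠ a : ℤ,
        ((if 1 ≤ n - p + 1 - a then S.ψb 0 a (S.ψ 0 (n - p + 1 - a) v)
            else -(S.ψ 0 (n - p + 1 - a) (S.ψb 0 a v)))
         - (if 1 ≤ n - p + 1 - a then S.ψb 1 a (S.ψ 1 (n - p + 1 - a) v)
            else -(S.ψ 1 (n - p + 1 - a) (S.ψb 1 a v)))))) ⊆ ↑Q := by
      rw [Function.support_subset_iff']
      intro p hp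
      rw [Finset.mem_coe, hQ, Finset.mem_Icc, not_and_or] at hp
      by_cases hp' : N ≤ p
      · rw [hin0 p, map_sum]
        refine Finset.sum_eq_zero fun a _ => ?_
        rw [map_sub, killF 0 p a _ hp', killF 1 p a _ hp', sub_zero]
      · rw [hin0 p, Finset.Ioo_eq_empty (by omega), Finset.sum_empty, map_zero]
    rw [finsum_eq_sum_of_support_subset _ hsuppK, ← Finset.sum_sub_distrib]
    refine Finset.sum_congr rfl fun p hp => ?_
    rw [hQ, Finset.mem_Icc] at hp
    have hsub0 : Finset.Ioo (n - p + 1 - N) N ⊆ Q2 := by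
      intro a ha; rw [Finset.mem_Ioo] at ha; rw [hQ2, Finset.mem_Icc]; omega
    rw [hin0 p, Finset.sum_subset hsub0 (fun a _ hna => hz0 p a hna), map_sum,
      ← Finset.sum_sub_distrib]
    refine Finset.sum_congr rfl fun a _ => ?_
    rw [map_sub]
  rw [hA, hδ, hD, hP0, hP1, hK0R]
  abel
end Main1
end Sys
end Stmt18

/-- in the tensor product of the Wakimoto module with the fermionic Fock
space, the field `ρ = γ²K⁺ − 2γK⁰ − K⁻ − ∂γ` factorizes as `ρ(z) = χ(z)·χ̄(z)` with
`χ = ψ¹ − γψ²`, `χ̄ = ψ̄² + γψ̄¹`, and all modes of `χ` and `χ̄` pairwise anticommute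
(in particular `χ_k² = χ̄_k² = 0`).

Conventions: fermionic and `χ` modes are indexed by `r : ℤ` standing for the
half-integer mode `r − 1/2`; `γ(z) = ∑ γ_n z^{−n}`, so `(∂γ)_n = −n·γ_n` and the
mode-`n` coefficient of a weight-one field pairs indices by `r + s = n + 1`. -/
theorem stmt18 (M : Type*) [AddCommGroup M] [Module ℂ M]
    (ψ ψb : Fin 2 → ℤ → Module.End ℂ M)
    (hCAR : ∀ (i j : Fin 2) (r s : ℤ),
      ψ i r * ψb j s + ψb j s * ψ i r = if i = j ∧ r + s = 1 then 1 else 0)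
    (hψψ : ∀ (i j : Fin 2) (r s : ℤ), ψ i r * ψ j s + ψ j s * ψ i r = 0)
    (hψbψb : ∀ (i j : Fin 2) (r s : ℤ), ψb i r * ψb j s + ψb j s * ψb i r = 0)
    (γ : ℤ → Module.End ℂ M)
    (hγγ : ∀ m n : ℤ, γ m * γ n = γ n * γ m)
    (hγψ : ∀ (m : ℤ) (i : Fin 2) (r : ℤ), γ m * ψ i r = ψ i r * γ m)
    (hγψb : ∀ (m : ℤ) (i : Fin 2) (r : ℤ), γ m * ψb i r = ψb i r * γ m)
    (hloc : ∀ v : M, ∃ N : ℤ, ∀ r : ℤ, N ≤ r →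
      γ r v = 0 ∧ ∀ i : Fin 2, ψ i r v = 0 ∧ ψb i r v = 0)
    (Kp Km K0 : ℤ → Module.End ℂ M)
    (hKp : ∀ (n : ℤ) (v : M), Kp n v = ∑ᶠ r : ℤ, ψb 0 r (ψ 1 (n + 1 - r) v))
    (hKm : ∀ (n : ℤ) (v : M), Km n v = ∑ᶠ r : ℤ, ψb 1 r (ψ 0 (n + 1 - r) v))
    (hK0 : ∀ (n : ℤ) (v : M), K0 n v = (1 / 2 : ℂ) • ∑ᶠ r : ℤ,
      ((if 1 ≤ n + 1 - r then ψb 0 r (ψ 0 (n + 1 - r) v)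
          else -(ψ 0 (n + 1 - r) (ψb 0 r v)))
       - (if 1 ≤ n + 1 - r then ψb 1 r (ψ 1 (n + 1 - r) v)
          else -(ψ 1 (n + 1 - r) (ψb 1 r v)))))
    -- the modes of ρ = γ²K⁺ − 2γK⁰ − K⁻ − ∂γ
    (ρ : ℤ → Module.End ℂ M)
    (hρ : ∀ (n : ℤ) (v : M), ρ n v =
      (∑ᶠ pq : ℤ × ℤ, γ pq.1 (γ pq.2 (Kp (n - pq.1 - pq.2) v)))
      - 2 • (∑ᶠ p : ℤ, γ p (K0 (n - p) v))
      - Km n v + (n : ℂ) • γ n v)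
    -- the modes of χ = ψ¹ − γψ² and χ̄ = ψ̄² + γψ̄¹
    (χ χb : ℤ → Module.End ℂ M)
    (hχ : ∀ (r : ℤ) (v : M), χ r v = ψ 0 r v - ∑ᶠ m : ℤ, γ m (ψ 1 (r - m) v))
    (hχb : ∀ (r : ℤ) (v : M), χb r v = ψb 1 r v + ∑ᶠ m : ℤ, γ m (ψb 0 (r - m) v)) :
    -- factorization ρ(z) = χ(z)·χ̄(z), in modes
    (∀ (n : ℤ) (v : M), ρ n v = ∑ᶠ r : ℤ, χ r (χb (n + 1 - r) v)) ∧
    -- all modes of χ, χ̄ pairwise anticommute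
    (∀ r s : ℤ, χ r * χ s + χ s * χ r = 0) ∧
    (∀ r s : ℤ, χb r * χ s + χ s * χb r = 0) ∧
    (∀ r s : ℤ, χb r * χb s + χb s * χb r = 0) ∧
    -- in particular χ_k² = χ̄_k² = 0
    (∀ r : ℤ, χ r * χ r = 0 ∧ χb r * χb r = 0) := by
  classical
  set S : Stmt18.Sys M := ⟨ψ, ψb, γ, hCAR, hψψ, hψbψb, hγγ, hγψ, hγψb⟩ with hS
  have hlocS : ∀ w : M, ∃ N : ℤ, S.Killed N w := fun w => hloc w
  have hχ' : ∀ (u : ℤ) (w : M), χ u w = S.ψ 0 u w - ∑ᶠ m : ℤ, S.γ m (S.ψ 1 (u - m) w) :=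
    fun u w => hχ u w
  have hχb' : ∀ (u : ℤ) (w : M), χb u w = S.ψb 1 u w + ∑ᶠ m : ℤ, S.γ m (S.ψb 0 (u - m) w) :=
    fun u w => hχb u w
  have h2 : ∀ r s : ℤ, χ r * χ s + χ s * χ r = 0 :=
    fun r s => Stmt18.Sys.chi_chi_mul χ hχ' hlocS r s
  have h3 : ∀ r s : ℤ, χb r * χ s + χ s * χb r = 0 :=
    fun r s => Stmt18.Sys.chib_chi_mul χ χb hχ' hχb' hlocS r s
  have h4 : ∀ r s : ℤ, χb r * χb s + χb s * χb r = 0 :=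
    fun r s => Stmt18.Sys.chib_chib_mul χb hχb' hlocS r s
  have hsq : ∀ (f : Module.End ℂ M), f + f = 0 → f = 0 := by
    intro f hf
    have h' : (2:ℂ) • f = 0 := by
      rw [two_smul]; exact hf
    rcases smul_eq_zero.mp h' with h | h
    · exact absurd h (by norm_num)
    · exact h
  refine ⟨?_, h2, h3, h4, fun r => ⟨hsq _ (h2 r r), hsq _ (h4 r r)⟩⟩
  intro n v
  obtain ⟨N₀, hk₀⟩ := hloc v
  set N : ℤ := max (max N₀ 2) (max (n + 2) (2 - n)) with hNdef
  have hk : S.Killed N v :=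
    Stmt18.Sys.Killed.mono (show S.Killed N₀ v from hk₀)
      (le_trans (le_max_left _ _) (le_max_left _ _))
  have hN : 2 ≤ N := le_trans (le_max_right N₀ 2) (le_max_left _ _)
  have hn1 : n + 2 ≤ N := le_trans (le_max_left (n + 2) (2 - n)) (le_max_right _ _)
  have hn2 : 2 - n ≤ N := le_trans (le_max_right (n + 2) (2 - n)) (le_max_right _ _)
  rw [hρ n v, hKm n v]
  have eKp : (∑ᶠ pq : ℤ × ℤ, γ pq.1 (γ pq.2 (Kp (n - pq.1 - pq.2) v)))
      = ∑ᶠ pq : ℤ × ℤ, S.γ pq.1 (S.γ pq.2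
          (∑ᶠ a : ℤ, S.ψb 0 a (S.ψ 1 (n - pq.1 - pq.2 + 1 - a) v))) :=
    finsum_congr fun pq => by rw [hKp]
  have eK0 : (2 • ∑ᶠ p : ℤ, γ p (K0 (n - p) v))
      = ∑ᶠ p : ℤ, S.γ p (∑ᶠ a : ℤ,
          ((if 1 ≤ n - p + 1 - a then S.ψb 0 a (S.ψ 0 (n - p + 1 - a) v)
             else -(S.ψ 0 (n - p + 1 - a) (S.ψb 0 a v)))
           - (if 1 ≤ n - p + 1 - a then S.ψb 1 a (S.ψ 1 (n - p + 1 - a) v)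
             else -(S.ψ 1 (n - p + 1 - a) (S.ψb 1 a v))))) := by
    have e1 : ∀ p : ℤ, γ p (K0 (n - p) v)
        = (1/2 : ℂ) • S.γ p (∑ᶠ a : ℤ,
          ((if 1 ≤ n - p + 1 - a then S.ψb 0 a (S.ψ 0 (n - p + 1 - a) v)
             else -(S.ψ 0 (n - p + 1 - a) (S.ψb 0 a v)))
           - (if 1 ≤ n - p + 1 - a then S.ψb 1 a (S.ψ 1 (n - p + 1 - a) v)
             else -(S.ψ 1 (n - p + 1 - a) (S.ψb 1 a v))))) := by
      intro p
      rw [hK0]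
      exact map_smul _ _ _
    rw [finsum_congr e1, ← smul_finsum, ← Nat.cast_smul_eq_nsmul ℂ 2, smul_smul]
    norm_num
  rw [eKp, eK0]
  exact (Stmt18.Sys.main1 χ χb hχ' hχb' h3 hk hN hn1 hn2).symm
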